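/- Let 0 < σ ≤ τ, let K := ⌈2τ/σ⌉ (the smallest integer with Kσ ≥ 2τ), and let β > 0. Then for every solution of the delayed Cucker–Smale system, the functional satisfies G(t) ≤ 𝒵^K_σ · Δ^0_v for all t ∈ [0, 2τ]. -/

import Mathlib

open scoped BigOperators
open MeasureTheory

/-- Diameter of a configuration `w` at time `t` (used for positions and velocities). -/
noncomputable def csDiam {N d : ℕ} (w : Fin N → ℝ → EuclideanSpace ℝ (Fin d)) (t : ℝ) : ℝ :=
  ⨆ i : Fin N, ⨆ j : Fin N, ‖w i t - w j t‖

/-- Maximum of the norms of `w' i t` over the agents `i`. -/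
noncomputable def csMaxDer {N d : ℕ} (w' : Fin N → ℝ → EuclideanSpace ℝ (Fin d)) (t : ℝ) : ℝ :=
  ⨆ i : Fin N, ‖w' i t‖

/-- Lyapunov–Krasovskii functional
`G(t) = d_v(t) + β ∫_{max(0,t-2τ)}^t e^{-(t-s)} ∫_s^t max_i |v̇_i(r)| dr ds`. -/
noncomputable def csG {N d : ℕ} (β τ : ℝ)
    (v v' : Fin N → ℝ → EuclideanSpace ℝ (Fin d)) (t : ℝ) : ℝ :=
  csDiam v t +
    β * ∫ s in (max 0 (t - 2 * τ))..t, Real.exp (-(t - s)) * ∫ r in s..t, csMaxDer v' r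

/-- Minimal communication rate `a̲(t) = min_{i ≠ j} ψ(|x_i(t-σ) - x_j(t-τ)|)/(N-1)`. -/
noncomputable def csAMin {N d : ℕ} (ψ : ℝ → ℝ) (σ τ : ℝ)
    (x : Fin N → ℝ → EuclideanSpace ℝ (Fin d)) (t : ℝ) : ℝ :=
  ⨅ p : {p : Fin N × Fin N // p.1 ≠ p.2},
    ψ ‖x p.val.1 (t - σ) - x p.val.2 (t - τ)‖ / (N - 1)


/-- `Δ^0_w = max_{i,j} max_{s,t ∈ [-τ,0]} |w_i(s) - w_j(t)|`. -/
noncomputable def csDelta0 {N d : ℕ} (τ : ℝ)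
    (w : Fin N → ℝ → EuclideanSpace ℝ (Fin d)) : ℝ :=
  ⨆ i : Fin N, ⨆ j : Fin N, ⨆ s : Set.Icc (-τ) (0:ℝ), ⨆ t : Set.Icc (-τ) (0:ℝ),
    ‖w i s - w j t‖

/-- Closed-form sequence `Z^k_σ`. -/
noncomputable def csZ (σ : ℝ) (k : ℕ) : ℝ :=
  (((1 + σ) + Real.sqrt (σ * (1 + σ))) ^ (k + 1)
    - ((1 + σ) - Real.sqrt (σ * (1 + σ))) ^ (k + 1)) / (2 * Real.sqrt (σ * (1 + σ)))

/-- `𝒵^K_σ = Z^K_σ + Z^{K-1}_σ · β (1 - (1+2τ) e^{-2τ})`. -/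
noncomputable def csCalZ (σ τ β : ℝ) (K : ℕ) : ℝ :=
  csZ σ K + csZ σ (K - 1) * (β * (1 - (1 + 2 * τ) * Real.exp (-(2 * τ))))



lemma cs_aux_exp_decay_mono {a b : ℝ} (ha : 0 ≤ a) (hab : a ≤ b) :
    (1+b)*Real.exp (-b) ≤ (1+a)*Real.exp (-a) := by
  have h1 : (b - a) + 1 ≤ Real.exp (b - a) := Real.add_one_le_exp _
  have h2 : Real.exp (-a) = Real.exp (b-a) * Real.exp (-b) := by
    rw [← Real.exp_add]; ring_nf
  have h3 := Real.exp_pos (-b)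
  have h4 : (1+b) ≤ (1+a) * Real.exp (b-a) := by
    nlinarith [mul_nonneg ha (sub_nonneg.2 hab)]
  calc (1+b) * Real.exp (-b) ≤ ((1+a) * Real.exp (b-a)) * Real.exp (-b) :=
        mul_le_mul_of_nonneg_right h4 h3.le
    _ = (1+a) * Real.exp (-a) := by rw [h2]; ring

lemma cs_aux_zk_ge {σ : ℝ} (hσ : 0 < σ) (k : ℕ) : (1 + 2*σ)^k ≤ csZ σ k := by
  set s := Real.sqrt (σ * (1 + σ)) with hs
  have hspos : 0 < s := Real.sqrt_pos.2 (by nlinarith)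
  have hσs : σ ≤ s := by
    rw [hs, show σ * (1+σ) = σ^2 + σ by ring]
    nlinarith [Real.sq_sqrt (by nlinarith : (0:ℝ) ≤ σ^2 + σ), Real.sqrt_nonneg (σ^2+σ)]
  have hs1 : s ≤ 1 + σ := by
    rw [hs]
    nlinarith [Real.sq_sqrt (by nlinarith : (0:ℝ) ≤ σ * (1+σ)), Real.sqrt_nonneg (σ*(1+σ))]
  have hgeom := geom_sum₂_mul ((1+σ)+s) ((1+σ)-s) (k+1)
  have hZ : csZ σ k = ∑ i ∈ Finset.range (k+1), ((1+σ)+s)^i * ((1+σ)-s)^(k-i) := by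
    rw [csZ, ← hgeom]
    have h2s : (1+σ)+s - ((1+σ)-s) = 2*s := by ring
    rw [h2s, mul_div_assoc, div_self (by positivity), mul_one]
    simp
  rw [hZ]
  have hterm : (1+2*σ)^k ≤ ((1+σ)+s)^k * ((1+σ)-s)^(k-k) := by
    simp only [Nat.sub_self, pow_zero, mul_one]
    exact pow_le_pow_left₀ (by linarith) (by linarith) k
  refine hterm.trans (Finset.single_le_sum
    (f := fun i => (1+σ+s)^i * (1+σ-s)^(k-i)) (fun i _ => ?_)
    (Finset.self_mem_range_succ k))
  have h1 : (0:ℝ) ≤ (1+σ)+s := by linarith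
  have h2 : (0:ℝ) ≤ (1+σ)-s := by linarith
  positivity

noncomputable def csU (σ τ : ℝ) (k : ℕ) : ℝ := min (k * σ) (2 * τ)

lemma csU_nonneg {σ τ : ℝ} (hσ : 0 ≤ σ) (hτ : 0 ≤ τ) (k : ℕ) : 0 ≤ csU σ τ k :=
  le_min (by positivity) (by linarith)

lemma csU_zero {σ τ : ℝ} (hτ : 0 ≤ τ) : csU σ τ 0 = 0 := by
  rw [csU]
  simp only [Nat.cast_zero, zero_mul]
  exact min_eq_left (by linarith)

lemma csU_succ_le {σ τ : ℝ} (hσ : 0 ≤ σ) (k : ℕ) : csU σ τ (k+1) ≤ csU σ τ k + σ := by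
  have h1 : ((k+1:ℕ):ℝ) * σ = (k:ℝ)*σ + σ := by push_cast; ring
  calc csU σ τ (k+1) = min ((k:ℝ)*σ + σ) (2*τ) := by rw [csU, h1]
    _ ≤ min ((k:ℝ)*σ + σ) (2*τ + σ) := min_le_min (le_refl _) (by linarith)
    _ = csU σ τ k + σ := by rw [csU, min_add_add_right]

set_option maxHeartbeats 2000000 in
theorem stmt_13
    (N d : ℕ) (hN : 2 ≤ N) (hd : 1 ≤ d)
    (σ τ : ℝ) (hσ : 0 < σ) (hστ : σ ≤ τ)
    (K : ℕ) (hK : K = ⌈2 * τ / σ⌉₊)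
    (β : ℝ) (hβ : 0 < β)
    (ψ : ℝ → ℝ)
    (hψpos : ∀ s, 0 ≤ s → 0 < ψ s)
    (hψcont : ContinuousOn ψ (Set.Ici 0))
    (hψmono : ∀ s t, 0 ≤ s → s ≤ t → ψ t ≤ ψ s)
    (hψbdd : ∀ s, 0 ≤ s → ψ s ≤ 1)
    (x v v' : Fin N → ℝ → EuclideanSpace ℝ (Fin d))
    (hxc : ∀ i, ContinuousOn (x i) (Set.Ici (-τ)))
    (hvc : ∀ i, ContinuousOn (v i) (Set.Ici (-τ)))
    (hxder : ∀ i, ∀ t, -τ < t → HasDerivAt (x i) (v i t) t)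
    (hvder : ∀ i, ∀ t > (0:ℝ), HasDerivAt (v i) (v' i t) t)
    (hode : ∀ i, ∀ t > (0:ℝ),
      v' i t = ∑ j ∈ Finset.univ.erase i,
        (ψ ‖x i (t - σ) - x j (t - τ)‖ / (N - 1)) • (v j (t - τ) - v i (t - σ))) :
    ∀ t ∈ Set.Icc (0:ℝ) (2 * τ),
      csG β τ v v' t ≤ csCalZ σ τ β K * csDelta0 τ v := by
  have hτ : 0 < τ := lt_of_lt_of_le hσ hστ
  haveI : Nonempty (Fin N) := ⟨⟨0, by omega⟩⟩
  haveI hIccNe : Nonempty ↥(Set.Icc (-τ) (0:ℝ)) := ⟨⟨0, by constructor <;> linarith⟩⟩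
  have hN1 : (1:ℝ) ≤ (N:ℝ) - 1 := by
    have h2N : (2:ℝ) ≤ (N:ℝ) := by exact_mod_cast hN
    linarith
  set Δ := csDelta0 τ v with hΔdef
  have hΔ0 : 0 ≤ Δ := by
    rw [hΔdef]
    exact Real.iSup_nonneg fun i => Real.iSup_nonneg fun j => Real.iSup_nonneg fun s =>
      Real.iSup_nonneg fun t => norm_nonneg _
  -- uniform bound on ‖v i r‖ over [-τ,0]
  obtain ⟨C, hC⟩ : ∃ C : ℝ, ∀ i : Fin N, ∀ r ∈ Set.Icc (-τ) (0:ℝ), ‖v i r‖ ≤ C := by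
    have h : ∀ i : Fin N, ∃ Ci : ℝ, ∀ r ∈ Set.Icc (-τ) (0:ℝ), ‖v i r‖ ≤ Ci := fun i =>
      isCompact_Icc.exists_bound_of_continuousOn ((hvc i).mono Set.Icc_subset_Ici_self)
    choose Cf hCf using h
    exact ⟨Finset.univ.sup' Finset.univ_nonempty Cf, fun i r hr =>
      (hCf i r hr).trans (Finset.le_sup' Cf (Finset.mem_univ i))⟩
  -- Δ dominates pairwise differences on [-τ,0]
  have hΔle : ∀ (i j : Fin N) (s t' : ℝ), s ∈ Set.Icc (-τ) (0:ℝ) → t' ∈ Set.Icc (-τ) (0:ℝ) →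
      ‖v i s - v j t'‖ ≤ Δ := by
    intro i j s t' hs ht'
    have h4 : ∀ (i j : Fin N) (a : ↥(Set.Icc (-τ) (0:ℝ))),
        (⨆ b : ↥(Set.Icc (-τ) (0:ℝ)), ‖v i a - v j b‖) ≤ C + C := fun i j a =>
      ciSup_le fun b => (norm_sub_le _ _).trans (add_le_add (hC i a a.2) (hC j b b.2))
    have bdd4 : ∀ (i j : Fin N) (a : ↥(Set.Icc (-τ) (0:ℝ))),
        BddAbove (Set.range fun b : ↥(Set.Icc (-τ) (0:ℝ)) => ‖v i a - v j b‖) := by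
      intro i j a
      refine ⟨C + C, ?_⟩
      rintro _ ⟨b, rfl⟩
      exact (norm_sub_le _ _).trans (add_le_add (hC i a a.2) (hC j b b.2))
    have h3 : ∀ i j : Fin N,
        (⨆ a : ↥(Set.Icc (-τ) (0:ℝ)), ⨆ b : ↥(Set.Icc (-τ) (0:ℝ)), ‖v i a - v j b‖) ≤ C + C :=
      fun i j => ciSup_le fun a => h4 i j a
    have bdd3 : ∀ i j : Fin N, BddAbove (Set.range fun a : ↥(Set.Icc (-τ) (0:ℝ)) =>
        ⨆ b : ↥(Set.Icc (-τ) (0:ℝ)), ‖v i a - v j b‖) := fun i j =>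
      ⟨C + C, by rintro _ ⟨a, rfl⟩; exact h4 i j a⟩
    have h2 : ∀ i : Fin N, (⨆ j : Fin N, ⨆ a : ↥(Set.Icc (-τ) (0:ℝ)),
        ⨆ b : ↥(Set.Icc (-τ) (0:ℝ)), ‖v i a - v j b‖) ≤ C + C :=
      fun i => ciSup_le fun j => h3 i j
    have bdd2 : ∀ i : Fin N, BddAbove (Set.range fun j : Fin N =>
        ⨆ a : ↥(Set.Icc (-τ) (0:ℝ)), ⨆ b : ↥(Set.Icc (-τ) (0:ℝ)), ‖v i a - v j b‖) := fun i =>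
      ⟨C + C, by rintro _ ⟨j, rfl⟩; exact h3 i j⟩
    have bdd1 : BddAbove (Set.range fun i : Fin N => ⨆ j : Fin N,
        ⨆ a : ↥(Set.Icc (-τ) (0:ℝ)), ⨆ b : ↥(Set.Icc (-τ) (0:ℝ)), ‖v i a - v j b‖) :=
      ⟨C + C, by rintro _ ⟨i, rfl⟩; exact h2 i⟩
    have l4 := le_ciSup (bdd4 i j ⟨s, hs⟩) (⟨t', ht'⟩ : ↥(Set.Icc (-τ) (0:ℝ)))
    have l3 := le_ciSup (bdd3 i j) (⟨s, hs⟩ : ↥(Set.Icc (-τ) (0:ℝ)))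
    have l2 := le_ciSup (bdd2 i) j
    have l1 := le_ciSup bdd1 i
    rw [hΔdef]
    unfold csDelta0
    exact le_trans l4 (le_trans l3 (le_trans l2 l1))
  -- segment estimate from the derivative bound
  have hseg : ∀ (i : Fin N) (c s : ℝ) (Cb : ℝ), 0 ≤ Cb → 0 ≤ c → c ≤ s →
      (∀ r, c < r → r ≤ s → ‖v' i r‖ ≤ Cb) → ‖v i s - v i c‖ ≤ Cb * (s - c) := by
    intro i c s Cb hCb hc hcs hb
    rcases eq_or_lt_of_le hcs with rfl | hlt
    · simp
    · have key : ∀ c' ∈ Set.Ioc c s, ‖v i s - v i c'‖ ≤ Cb * (s - c') := by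
        intro c' hc'
        have h1 : ∀ y ∈ Set.Icc c' s, HasDerivWithinAt (v i) (v' i y) (Set.Icc c' s) y :=
          fun y hy => (hvder i y (lt_of_le_of_lt hc (lt_of_lt_of_le hc'.1 hy.1))).hasDerivWithinAt
        have h2 : ∀ y ∈ Set.Ico c' s, ‖v' i y‖ ≤ Cb :=
          fun y hy => hb y (lt_of_lt_of_le hc'.1 hy.1) hy.2.le
        exact norm_image_sub_le_of_norm_deriv_le_segment' h1 h2 s (Set.right_mem_Icc.2 hc'.2)
      have hmemI : Set.Ioc c s ∈ nhdsWithin c (Set.Ioi c) :=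
        Ioc_mem_nhdsGT_of_mem ⟨le_refl c, hlt⟩
      have hcw : ContinuousWithinAt (v i) (Set.Ioi c) c := by
        refine ((hvc i) c (Set.mem_Ici.mpr (by linarith))).mono ?_
        intro y hy
        exact Set.mem_Ici.mpr (by simp only [Set.mem_Ioi] at hy; linarith)
      have ht1 : Filter.Tendsto (fun c' => ‖v i s - v i c'‖) (nhdsWithin c (Set.Ioi c))
          (nhds ‖v i s - v i c‖) := (Filter.Tendsto.sub tendsto_const_nhds hcw.tendsto).norm
      have ht2 : Filter.Tendsto (fun c' => Cb * (s - c')) (nhdsWithin c (Set.Ioi c))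
          (nhds (Cb * (s - c))) := by
        have hcont : Continuous fun c' : ℝ => Cb * (s - c') := continuous_const.mul (continuous_const.sub continuous_id)
        exact (hcont.tendsto c).mono_left nhdsWithin_le_nhds
      exact le_of_tendsto_of_tendsto ht1 ht2 (Filter.eventually_of_mem hmemI key)
  -- ODE bound on the derivative
  have hode_b : ∀ (k : ℕ) (Bk : ℝ), 0 ≤ Bk →
      (∀ i j : Fin N, ∀ s ∈ Set.Icc (-τ) (csU σ τ k), ∀ t' ∈ Set.Icc (-τ) (csU σ τ k),
        ‖v i s - v j t'‖ ≤ Bk) →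
      ∀ (i : Fin N) (r : ℝ), 0 < r → r - σ ≤ csU σ τ k → ‖v' i r‖ ≤ Bk := by
    intro k Bk hBk hpair i r hr hrσ
    have hmem1 : r - τ ∈ Set.Icc (-τ) (csU σ τ k) := ⟨by linarith, by linarith⟩
    have hmem2 : r - σ ∈ Set.Icc (-τ) (csU σ τ k) := ⟨by linarith, hrσ⟩
    rw [hode i r hr]
    refine le_trans (norm_sum_le _ _) ?_
    have hcard : (Finset.univ.erase i).card = N - 1 := by
      rw [Finset.card_erase_of_mem (Finset.mem_univ i), Finset.card_univ, Fintype.card_fin]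
    have hterm : ∀ j ∈ Finset.univ.erase i,
        ‖(ψ ‖x i (r - σ) - x j (r - τ)‖ / ((N:ℝ) - 1)) • (v j (r - τ) - v i (r - σ))‖
          ≤ Bk / ((N:ℝ)-1) := by
      intro j _
      rw [norm_smul]
      have hψa : 0 < ψ ‖x i (r - σ) - x j (r - τ)‖ := hψpos _ (norm_nonneg _)
      have hψb : ψ ‖x i (r - σ) - x j (r - τ)‖ ≤ 1 := hψbdd _ (norm_nonneg _)
      have habs : ‖ψ ‖x i (r - σ) - x j (r - τ)‖ / ((N:ℝ) - 1)‖
          = ψ ‖x i (r - σ) - x j (r - τ)‖ / ((N:ℝ) - 1) := by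
        rw [Real.norm_eq_abs, abs_of_pos (by positivity)]
      rw [habs]
      have hvb : ‖v j (r - τ) - v i (r - σ)‖ ≤ Bk := hpair j i _ hmem1 _ hmem2
      calc ψ ‖x i (r - σ) - x j (r - τ)‖ / ((N:ℝ) - 1) * ‖v j (r - τ) - v i (r - σ)‖
          ≤ (1 / ((N:ℝ)-1)) * Bk := by
            apply mul_le_mul _ hvb (norm_nonneg _) (by positivity)
            apply div_le_div_of_nonneg_right hψb
            linarith
        _ = Bk / ((N:ℝ)-1) := by ring
    refine le_trans (Finset.sum_le_card_nsmul _ _ _ hterm) ?_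
    rw [hcard, nsmul_eq_mul, Nat.cast_sub (by omega), Nat.cast_one]
    have hne : ((N:ℝ)-1) ≠ 0 := by linarith
    have heq : ((N:ℝ)-1) * (Bk/((N:ℝ)-1)) = Bk := by field_simp
    linarith
  -- the step induction
  have hP : ∀ k : ℕ, ∀ i j : Fin N, ∀ s ∈ Set.Icc (-τ) (csU σ τ k),
      ∀ t' ∈ Set.Icc (-τ) (csU σ τ k), ‖v i s - v j t'‖ ≤ (1 + 2*σ)^k * Δ := by
    intro k
    induction k with
    | zero =>
      intro i j s hs t' ht'
      rw [csU_zero hτ.le] at hs ht'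
      simpa using hΔle i j s t' hs ht'
    | succ k ih =>
      intro i j s hs t' ht'
      have hBk0 : 0 ≤ (1 + 2*σ)^k * Δ := mul_nonneg (pow_nonneg (by linarith) k) hΔ0
      have hv'b : ∀ (i' : Fin N) (r : ℝ), csU σ τ k < r → r ≤ csU σ τ (k+1) →
          ‖v' i' r‖ ≤ (1 + 2*σ)^k * Δ := by
        intro i' r h1 h2
        refine hode_b k _ hBk0 ih i' r (lt_of_le_of_lt (csU_nonneg hσ.le hτ.le k) h1) ?_
        have := csU_succ_le (τ := τ) hσ.le k
        linarith
      have hsegk : ∀ (i' : Fin N) (s' : ℝ), s' ∈ Set.Icc (-τ) (csU σ τ (k+1)) →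
          ‖v i' s' - v i' (min s' (csU σ τ k))‖ ≤ ((1 + 2*σ)^k * Δ) * σ := by
        intro i' s' hs'
        rcases le_or_gt s' (csU σ τ k) with h | h
        · rw [min_eq_left h]
          simpa using mul_nonneg hBk0 hσ.le
        · rw [min_eq_right h.le]
          have hd : s' - csU σ τ k ≤ σ := by
            have := csU_succ_le (τ := τ) hσ.le k
            linarith [hs'.2]
          have hsg := hseg i' (csU σ τ k) s' _ hBk0 (csU_nonneg hσ.le hτ.le k) h.le
            (fun r hr1 hr2 => hv'b i' r hr1 (le_trans hr2 hs'.2))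
          exact hsg.trans (mul_le_mul_of_nonneg_left hd hBk0)
      have hmem : ∀ s' : ℝ, s' ∈ Set.Icc (-τ) (csU σ τ (k+1)) →
          min s' (csU σ τ k) ∈ Set.Icc (-τ) (csU σ τ k) := by
        intro s' hs'
        refine ⟨le_min hs'.1 ?_, min_le_right _ _⟩
        have := csU_nonneg (τ := τ) hσ.le hτ.le k
        linarith
      have e1 := hsegk i s hs
      have e3 := hsegk j t' ht'
      have e2 := ih i j _ (hmem s hs) _ (hmem t' ht')
      have hsplit : v i s - v j t' = (v i s - v i (min s (csU σ τ k))) +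
          (v i (min s (csU σ τ k)) - v j (min t' (csU σ τ k))) +
          (v j (min t' (csU σ τ k)) - v j t') := by abel
      rw [hsplit]
      refine le_trans norm_add₃_le ?_
      have e3' : ‖v j (min t' (csU σ τ k)) - v j t'‖ ≤ ((1 + 2*σ)^k * Δ) * σ := by
        rw [norm_sub_rev]; exact e3
      have hpow : (1 + 2*σ)^(k+1) * Δ
          = ((1 + 2*σ)^k * Δ) * σ + (1 + 2*σ)^k * Δ + ((1 + 2*σ)^k * Δ) * σ := by
        rw [pow_succ]; ring
      rw [hpow]
      exact add_le_add (add_le_add e1 e2) e3'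
  -- main part
  intro t ht
  have hKσ : 2*τ ≤ (K:ℝ)*σ := by
    have h1 : 2*τ/σ ≤ ((⌈2*τ/σ⌉₊ : ℕ) : ℝ) := Nat.le_ceil _
    have h2 : 2*τ = (2*τ/σ)*σ := by field_simp
    rw [hK, show (2*τ/σ) = 2*τ/σ by ring] at *
    calc 2*τ = (2*τ/σ)*σ := h2
      _ ≤ ((⌈2*τ/σ⌉₊ : ℕ) : ℝ) * σ := mul_le_mul_of_nonneg_right h1 hσ.le
  have huK : csU σ τ K = 2*τ := by rw [csU]; exact min_eq_right hKσ
  have hK1 : 1 ≤ K := by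
    rw [hK]
    exact Nat.ceil_pos.mpr (div_pos (by linarith) hσ)
  set B1 := (1+2*σ)^(K-1) * Δ with hB1def
  have hB10 : 0 ≤ B1 := mul_nonneg (pow_nonneg (by linarith) _) hΔ0
  have hB1b : ∀ (i : Fin N) (r : ℝ), 0 < r → r ≤ 2*τ → ‖v' i r‖ ≤ B1 := by
    intro i r hr hr2
    refine hode_b (K-1) _ hB10 (hP (K-1)) i r hr ?_
    have hcast : ((K-1:ℕ):ℝ) = (K:ℝ) - 1 := by
      rw [Nat.cast_sub hK1, Nat.cast_one]
    rw [csU]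
    refine le_min ?_ (by linarith)
    rw [hcast]
    have : ((K:ℝ)-1)*σ = (K:ℝ)*σ - σ := by ring
    linarith
  have hmax : ∀ r : ℝ, 0 < r → r ≤ 2*τ → csMaxDer v' r ≤ B1 :=
    fun r h1 h2 => ciSup_le fun i => hB1b i r h1 h2
  have hmax0 : ∀ r : ℝ, 0 ≤ csMaxDer v' r := fun r => Real.iSup_nonneg fun i => norm_nonneg _
  have hinner0 : ∀ s : ℝ, s ≤ t → 0 ≤ ∫ r in s..t, csMaxDer v' r :=
    fun s hs => intervalIntegral.integral_nonneg hs (fun r _ => hmax0 r)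
  have hinner : ∀ s : ℝ, 0 ≤ s → s ≤ t → (∫ r in s..t, csMaxDer v' r) ≤ B1 * (t - s) := by
    intro s h0 hst
    rw [intervalIntegral.integral_of_le hst]
    have hle : ∫ r in Set.Ioc s t, csMaxDer v' r ≤ ∫ _ in Set.Ioc s t, B1 := by
      refine integral_mono_of_nonneg (Filter.Eventually.of_forall fun r => hmax0 r)
        ((integrableOn_const_iff (C := B1)).mpr (Or.inr (by rw [Real.volume_Ioc]; exact ENNReal.ofReal_lt_top))) ?_
      refine Filter.eventually_of_mem (self_mem_ae_restrict measurableSet_Ioc) ?_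
      intro r hr
      exact hmax r (lt_of_le_of_lt h0 hr.1) (le_trans hr.2 ht.2)
    refine hle.trans ?_
    rw [setIntegral_const, smul_eq_mul, Real.volume_real_Ioc_of_le hst]
    linarith [mul_comm (t-s) B1]
  have houter : (∫ s in (0:ℝ)..t, Real.exp (-(t - s)) * ∫ r in s..t, csMaxDer v' r)
      ≤ B1 * (1 - (1+t)*Real.exp (-t)) := by
    have h0t : (0:ℝ) ≤ t := ht.1
    have hgcont : Continuous fun s : ℝ => B1 * (Real.exp (-(t - s)) * (t - s)) := continuous_const.mul ((Real.continuous_exp.comp (continuous_const.sub continuous_id).neg).mul (continuous_const.sub continuous_id))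
    have hle : (∫ s in (0:ℝ)..t, Real.exp (-(t - s)) * ∫ r in s..t, csMaxDer v' r)
        ≤ ∫ s in (0:ℝ)..t, B1 * (Real.exp (-(t - s)) * (t - s)) := by
      rw [intervalIntegral.integral_of_le h0t, intervalIntegral.integral_of_le h0t]
      refine integral_mono_of_nonneg ?_ hgcont.integrableOn_Ioc ?_
      · refine Filter.eventually_of_mem (self_mem_ae_restrict measurableSet_Ioc) ?_
        intro s hs
        exact mul_nonneg (Real.exp_pos _).le (hinner0 s hs.2)
      · refine Filter.eventually_of_mem (self_mem_ae_restrict measurableSet_Ioc) ?_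
        intro s hs
        calc Real.exp (-(t - s)) * ∫ r in s..t, csMaxDer v' r
            ≤ Real.exp (-(t - s)) * (B1 * (t - s)) :=
              mul_le_mul_of_nonneg_left (hinner s hs.1.le hs.2) (Real.exp_pos _).le
          _ = B1 * (Real.exp (-(t - s)) * (t - s)) := by ring
    refine hle.trans ?_
    rw [intervalIntegral.integral_const_mul]
    have hFTC : (∫ s in (0:ℝ)..t, Real.exp (-(t - s)) * (t - s)) = 1 - (1+t)*Real.exp (-t) := by
      have hds : ∀ s ∈ Set.uIcc (0:ℝ) t, HasDerivAt (fun s => (t - s + 1) * Real.exp (-(t - s)))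
          (Real.exp (-(t-s)) * (t - s)) s := by
        intro s _
        have h1 : HasDerivAt (fun s : ℝ => -(t - s)) 1 s := by
          exact (((hasDerivAt_id s).const_sub t).neg).congr_deriv (neg_neg _)
        have h2 : HasDerivAt (fun s : ℝ => Real.exp (-(t - s))) (Real.exp (-(t-s)) * 1) s := h1.exp
        have h3 : HasDerivAt (fun s : ℝ => t - s + 1) (-1) s := by
          simpa using ((hasDerivAt_id s).const_sub t).add_const 1
        have h4 := h3.mul h2
        refine h4.congr_deriv ?_
        ring
      have hcont : Continuous fun s : ℝ => Real.exp (-(t - s)) * (t - s) := (Real.continuous_exp.comp (continuous_const.sub continuous_id).neg).mul (continuous_const.sub continuous_id)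
      rw [intervalIntegral.integral_eq_sub_of_hasDerivAt hds (hcont.intervalIntegrable _ _)]
      simp [Real.exp_zero]
      ring
    rw [hFTC]
  set c := 1 - (1+2*τ)*Real.exp (-(2*τ)) with hcdef
  have hmono : 1 - (1+t)*Real.exp (-t) ≤ c := by
    have := cs_aux_exp_decay_mono ht.1 ht.2
    rw [hcdef]; linarith
  have hc0 : 0 ≤ c := by
    have h := cs_aux_exp_decay_mono (le_refl (0:ℝ)) (by linarith : (0:ℝ) ≤ 2*τ)
    simp only [neg_zero, Real.exp_zero, add_zero, mul_one] at h
    rw [hcdef]; linarith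
  have hdiam : csDiam v t ≤ (1+2*σ)^K * Δ := by
    have htmem : t ∈ Set.Icc (-τ) (csU σ τ K) := ⟨by linarith [ht.1], by rw [huK]; exact ht.2⟩
    exact ciSup_le fun i => ciSup_le fun j => hP K i j t htmem t htmem
  have hmax2τ : max 0 (t - 2*τ) = 0 := max_eq_left (by linarith [ht.2])
  have houter' : β * (∫ s in (0:ℝ)..t, Real.exp (-(t - s)) * ∫ r in s..t, csMaxDer v' r)
      ≤ β * (B1 * c) := by
    refine mul_le_mul_of_nonneg_left (houter.trans ?_) hβ.le
    exact mul_le_mul_of_nonneg_left hmono hB10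
  have hZK := cs_aux_zk_ge hσ K
  have hZK1 := cs_aux_zk_ge hσ (K-1)
  have hfin1 : (1+2*σ)^K * Δ ≤ csZ σ K * Δ := mul_le_mul_of_nonneg_right hZK hΔ0
  have hfin2 : β * (B1 * c) ≤ csZ σ (K-1) * (β * c) * Δ := by
    rw [hB1def]
    have : β * ((1+2*σ)^(K-1) * Δ * c) = (1+2*σ)^(K-1) * (β * c * Δ) := by ring
    rw [this]
    calc (1+2*σ)^(K-1) * (β * c * Δ) ≤ csZ σ (K-1) * (β * c * Δ) :=
          mul_le_mul_of_nonneg_right hZK1 (by positivity)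
      _ = csZ σ (K-1) * (β * c) * Δ := by ring
  have hcal : csCalZ σ τ β K * Δ = csZ σ K * Δ + csZ σ (K-1) * (β * c) * Δ := by
    rw [csCalZ, hcdef]; ring
  rw [csG, hmax2τ, hcal]
  calc csDiam v t + β * ∫ s in (0:ℝ)..t, Real.exp (-(t - s)) * ∫ r in s..t, csMaxDer v' r
      ≤ (1+2*σ)^K * Δ + β * (B1 * c) := add_le_add hdiam houter'
    _ ≤ csZ σ K * Δ + csZ σ (K-1) * (β * c) * Δ := add_le_add hfin1 hfin2
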